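/- Cooley–Tukey factorization of the DFT: for N = m·q, the N-point discrete Fourier transform matrix factors as DFT_N = L ∘ (DFT_m ⊗ I_q) ∘ D ∘ (I_m ⊗ DFT_q), where L is a permutation matrix (the stride permutation) and D is the diagonal matrix of twiddle factors diag(ω^{t_k}) with ω = e^{2πi/N} and t_k = (k mod m)·⌊k/m⌋ for k = 0,…,N−1. -/

import Mathlib

open Matrix Complex

/-- The (unnormalized) `N`-point discrete Fourier transform matrix, with entries
`ω^{jk}`, `ω = exp(2πi/N)`. -/
noncomputable def dftMatrix (N : ℕ) : Matrix (Fin N) (Fin N) ℂ :=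
  fun j k => Complex.exp (2 * Real.pi * I / N) ^ ((j : ℕ) * (k : ℕ))

/-- Cooley–Tukey factorization of the DFT: for `N = m·q`,
`DFT_N = L * (DFT_m ⊗ I_q) * D * (I_m ⊗ DFT_q)`, where (under the identification of the
index `k` with the pair `(k mod m, k div m)`, i.e. `k = j + m·l` with `0 ≤ j < m`,
`0 ≤ l < q`):
* `L` is the stride permutation matrix sending index `j + m·l` to `l + q·j`,
* `DFT_m ⊗ I_q` and `I_m ⊗ DFT_q` are the Kronecker products written entrywise,
* `D = diag(ω^{t_k})` with `ω = exp(2πi/N)` and `t_k = (k mod m)·⌊k/m⌋`. -/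
theorem dft_cooley_tukey (m q : ℕ) (hm : 0 < m) (hq : 0 < q) :
    let N := m * q
    let ω : ℂ := Complex.exp (2 * Real.pi * I / N)
    -- stride permutation: `(L x)_{l + q·j} = x_{j + m·l}`
    let L : Matrix (Fin N) (Fin N) ℂ :=
      fun r c => if (r : ℕ) = (c : ℕ) / m + q * ((c : ℕ) % m) then 1 else 0
    -- `DFT_m ⊗ I_q` under the identification `k ↔ (k mod m, k div m)`
    let B : Matrix (Fin N) (Fin N) ℂ :=
      fun r c => (if (r : ℕ) / m = (c : ℕ) / m then 1 else 0) *
        Complex.exp (2 * Real.pi * I / m) ^ (((r : ℕ) % m) * ((c : ℕ) % m))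
    -- twiddle factors `D = diag(ω^{(k mod m)·⌊k/m⌋})`
    let D : Matrix (Fin N) (Fin N) ℂ :=
      Matrix.diagonal (fun k => ω ^ (((k : ℕ) % m) * ((k : ℕ) / m)))
    -- `I_m ⊗ DFT_q` under the identification `k ↔ (k mod m, k div m)`
    let C : Matrix (Fin N) (Fin N) ℂ :=
      fun r c => (if (r : ℕ) % m = (c : ℕ) % m then 1 else 0) *
        Complex.exp (2 * Real.pi * I / q) ^ (((r : ℕ) / m) * ((c : ℕ) / m))
    dftMatrix N = L * B * D * C := by
  intro N ω L B D C
  have hN : 0 < N := Nat.mul_pos hm hq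
  have hNc : (N : ℂ) ≠ 0 := Nat.cast_ne_zero.mpr hN.ne'
  have hmc : (m : ℂ) ≠ 0 := Nat.cast_ne_zero.mpr hm.ne'
  have hqc : (q : ℂ) ≠ 0 := Nat.cast_ne_zero.mpr hq.ne'
  have hNmq : (N : ℂ) = (m : ℂ) * (q : ℂ) := by simp [N, Nat.cast_mul]
  have hωN : ω ^ (m * q) = 1 := by
    rw [show ω ^ (m * q) = Complex.exp ((N : ℂ) * (2 * Real.pi * I / N)) from
      (Complex.exp_nat_mul _ N).symm, mul_div_cancel₀ _ hNc, Complex.exp_two_pi_mul_I]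
  have hζm : Complex.exp (2 * Real.pi * I / m) = ω ^ q := by
    rw [show ω ^ q = Complex.exp ((q : ℂ) * (2 * Real.pi * I / N)) from
      (Complex.exp_nat_mul _ q).symm]
    congr 1
    rw [hNmq]; field_simp
  have hζq : Complex.exp (2 * Real.pi * I / q) = ω ^ m := by
    rw [show ω ^ m = Complex.exp ((m : ℂ) * (2 * Real.pi * I / N)) from
      (Complex.exp_nat_mul _ m).symm]
    congr 1
    rw [hNmq]; field_simp
  rw [mul_assoc, mul_assoc]
  ext r c
  have hrq : (r : ℕ) / q < m := Nat.div_lt_of_lt_mul (by rw [mul_comm q m]; exact r.isLt)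
  have hrm : (r : ℕ) % q < q := Nat.mod_lt _ hq
  have hcm : (c : ℕ) % m < m := Nat.mod_lt _ hm
  have hb : (r : ℕ) / q + m * ((r : ℕ) % q) < N := by
    calc (r : ℕ) / q + m * ((r : ℕ) % q) < m + m * ((r : ℕ) % q) := by omega
    _ = m * ((r : ℕ) % q + 1) := by ring
    _ ≤ m * q := Nat.mul_le_mul_left _ (by omega)
  have ht : (c : ℕ) % m + m * ((r : ℕ) % q) < N := by
    calc (c : ℕ) % m + m * ((r : ℕ) % q) < m + m * ((r : ℕ) % q) := by omega
    _ = m * ((r : ℕ) % q + 1) := by ring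
    _ ≤ m * q := Nat.mul_le_mul_left _ (by omega)
  have b : Fin N := ⟨(r : ℕ) / q + m * ((r : ℕ) % q), hb⟩
  -- value facts
  have hbmod : (((r : ℕ) / q + m * ((r : ℕ) % q)) % m) = (r : ℕ) / q := by
    rw [Nat.add_mul_mod_self_left]; exact Nat.mod_eq_of_lt hrq
  have hbdiv : (((r : ℕ) / q + m * ((r : ℕ) % q)) / m) = (r : ℕ) % q := by
    rw [Nat.add_mul_div_left _ _ hm, Nat.div_eq_of_lt hrq, zero_add]
  have htmod : (((c : ℕ) % m + m * ((r : ℕ) % q)) % m) = (c : ℕ) % m := by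
    rw [Nat.add_mul_mod_self_left]; exact Nat.mod_eq_of_lt hcm
  have htdiv : (((c : ℕ) % m + m * ((r : ℕ) % q)) / m) = (r : ℕ) % q := by
    rw [Nat.add_mul_div_left _ _ hm, Nat.div_eq_of_lt hcm, zero_add]
  have step1 : (L * (B * (D * C))) r c = (B * (D * C)) ⟨_, hb⟩ c := by
    rw [Matrix.mul_apply]
    rw [Fintype.sum_eq_single (⟨(r : ℕ) / q + m * ((r : ℕ) % q), hb⟩ : Fin N) ?_]
    · have hcond : (r : ℕ) = ((r : ℕ) / q + m * ((r : ℕ) % q)) / m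
          + q * (((r : ℕ) / q + m * ((r : ℕ) % q)) % m) := by
        rw [hbmod, hbdiv]; exact (Nat.mod_add_div _ _).symm
      simp only [L]
      rw [if_pos hcond, one_mul]
    · intro k hk
      have hcond : ¬ ((r : ℕ) = (k : ℕ) / m + q * ((k : ℕ) % m)) := by
        intro h
        apply hk
        have hkdq : (k : ℕ) / m < q := Nat.div_lt_of_lt_mul k.isLt
        have h1 : (r : ℕ) % q = (k : ℕ) / m := by
          rw [h, Nat.add_mul_mod_self_left, Nat.mod_eq_of_lt hkdq]
        have h2 : (r : ℕ) / q = (k : ℕ) % m := by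
          rw [h, Nat.add_mul_div_left _ _ hq, Nat.div_eq_of_lt hkdq, zero_add]
        apply Fin.ext
        show (k : ℕ) = (r : ℕ) / q + m * ((r : ℕ) % q)
        rw [h1, h2]; exact (Nat.mod_add_div _ _).symm
      simp only [L]
      rw [if_neg hcond, zero_mul]
  have step2 : (B * (D * C)) (⟨_, hb⟩ : Fin N) c
      = B ⟨_, hb⟩ ⟨_, ht⟩ * (D * C) (⟨_, ht⟩ : Fin N) c := by
    rw [Matrix.mul_apply]
    rw [Fintype.sum_eq_single (⟨(c : ℕ) % m + m * ((r : ℕ) % q), ht⟩ : Fin N) ?_]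
    intro k hk
    by_cases h1 : ((r : ℕ) / q + m * ((r : ℕ) % q)) / m = (k : ℕ) / m
    · by_cases h2 : (k : ℕ) % m = (c : ℕ) % m
      · exfalso
        apply hk
        apply Fin.ext
        show (k : ℕ) = (c : ℕ) % m + m * ((r : ℕ) % q)
        rw [← h2, ← hbdiv, h1]
        exact (Nat.mod_add_div _ _).symm
      · have : (D * C) k c = ω ^ (((k : ℕ) % m) * ((k : ℕ) / m)) * C k c := by
          simp only [D, Matrix.diagonal_mul]
        rw [this]
        simp only [C]
        rw [if_neg h2, zero_mul, mul_zero, mul_zero]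
    · simp only [B]
      show (if ((r : ℕ) / q + m * ((r : ℕ) % q)) / m = (k : ℕ) / m then (1:ℂ) else 0) * _ * _ = 0
      rw [if_neg h1, zero_mul, zero_mul]
  have hDC : (D * C) (⟨_, ht⟩ : Fin N) c
      = ω ^ ((((c : ℕ) % m + m * ((r : ℕ) % q)) % m) * (((c : ℕ) % m + m * ((r : ℕ) % q)) / m))
        * C ⟨_, ht⟩ c := by
    simp only [D, Matrix.diagonal_mul]
  rw [step1, step2, hDC]
  simp only [B, C]
  simp only [hbmod, hbdiv, htmod, htdiv, eq_self_iff_true, if_true, one_mul]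
  rw [hζm, hζq]
  rw [← pow_mul, ← pow_mul, ← pow_add, ← pow_add]
  show ω ^ ((r : ℕ) * (c : ℕ)) = _
  set a := (r : ℕ) / q with ha
  set b' := (r : ℕ) % q with hb'
  set u := (c : ℕ) / m with hu
  set v := (c : ℕ) % m with hv
  have hr' : (r : ℕ) = q * a + b' := by rw [ha, hb']; exact (Nat.div_add_mod _ _).symm
  have hc' : (c : ℕ) = m * u + v := by rw [hu, hv]; exact (Nat.div_add_mod _ _).symm
  have hexp : (r : ℕ) * (c : ℕ) = (q * (a * v) + (v * b' + m * (b' * u))) + m * q * (a * u) := by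
    rw [hr', hc']; ring
  rw [hexp, pow_add, pow_mul, hωN, one_pow, mul_one]
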